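/- Let 0 < α < 1. The steepest-descent condition Re(sqrt(1 − α(x + iy))) = sqrt(1 − α), for real x, y with y > 0, is equivalent to x = y²/(4(1/α − 1)) + 1. -/

import Mathlib

open Complex

theorem gustafsson_contour_char (α : ℝ) (hα0 : 0 < α) (hα1 : α < 1) (x y : ℝ) (hy : 0 < y) :
    ((1 - (α : ℂ) * ((x : ℂ) + (y : ℂ) * Complex.I)) ^ ((1 : ℂ) / 2)).re = Real.sqrt (1 - α) ↔
      x = y ^ 2 / (4 * (1 / α - 1)) + 1 := by
  have hα : (0:ℝ) < 1 - α := by linarith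
  set w : ℂ := 1 - (α : ℂ) * ((x : ℂ) + (y : ℂ) * Complex.I) with hw
  have hre : w.re = 1 - α * x := by simp [hw]
  have him : w.im = -(α * y) := by simp [hw]
  have hns : Complex.normSq w = (1 - α*x)^2 + (α*y)^2 := by
    rw [Complex.normSq_apply, hre, him]; ring
  have key : (w ^ ((1:ℂ)/2)).re = Real.sqrt ((‖w‖ + w.re) / 2) := by
    rw [show (1:ℂ)/2 = (2⁻¹:ℂ) by norm_num]
    exact Complex.cpow_inv_two_re w
  rw [key]
  have hA : 0 ≤ (‖w‖ + w.re) / 2 := by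
    have := Complex.abs_re_le_norm w
    have := neg_abs_le w.re
    linarith
  rw [Real.sqrt_inj hA hα.le, hre]
  constructor
  · intro h
    have habs : ‖w‖ = 1 - 2*α + α*x := by linarith
    have hsq : Complex.normSq w = (1 - 2*α + α*x)^2 := by
      rw [← Complex.sq_norm, habs]
    rw [hns] at hsq
    have hx : α * y^2 = 4*(1-α)*(x-1) := by nlinarith
    field_simp
    nlinarith
  · intro h
    have hx : α * y^2 = 4*(1-α)*(x-1) := by
      rw [h]; field_simp; ring
    have hx1 : 1 ≤ x := by nlinarith
    have hnn : (0:ℝ) ≤ 1 - 2*α + α*x := by nlinarith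
    have habs : ‖w‖ = 1 - 2*α + α*x := by
      rw [Complex.norm_def, hns]
      rw [show (1 - α*x)^2 + (α*y)^2 = (1 - 2*α + α*x)^2 by nlinarith]
      exact Real.sqrt_sq hnn
    rw [habs]; ring
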